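/- (V2-operation soundness) Let G be a finite graph with model E₃^T, and x ∈ V ∖ (T ∪ {u,v}) a vertex of degree 2 with neighbors y, z. Let G₁ = G ∖ x and G₂ = G/xy (with T unchanged, the contracted vertex inheriting membership from y). Conditioned on edges xy and xz having different colors, the connection probabilities P(u₀ → v_i) in G equal those in G₁; conditioned on xy and xz having the same color, they equal those in G₂. Hence P_G(u₀→v_i) = (1/2) P_{G₁}(u₀→v_i) + (1/2) P_{G₂}(u₀→v_i) for i = 0,1, and if G₁ and G₂ satisfy the bunkbed inequality then so does G. -/

import Mathlib

open scoped Classical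

noncomputable section

/-- Indicator of a proposition, as a real number. -/
def pInd (P : Prop) : ℝ := if P then 1 else 0

/-- A finite multigraph without loops on vertex set `V`. -/
structure Multigraph (V : Type) where
  E : Type
  fintypeE : Fintype E
  decEqE : DecidableEq E
  ends : E → Sym2 V
  not_isDiag : ∀ e, ¬ (ends e).IsDiag

attribute [instance] Multigraph.fintypeE Multigraph.decEqE

variable {V : Type}

/-- Colored presence graph of model E₃ on a multigraph: the copy of edge `e` lives in
the layer given by its color `c e`; vertical edges at `T`. -/
def Multigraph.ccGraph (M : Multigraph V) (c : M.E → Bool) (T : Set V) :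
    SimpleGraph (V × Bool) where
  Adj a b := (a.2 = b.2 ∧ ∃ e, M.ends e = s(a.1, b.1) ∧ c e = a.2) ∨
    (a.1 = b.1 ∧ a.2 ≠ b.2 ∧ a.1 ∈ T)
  symm := by
    constructor
    intro a b h
    rcases h with ⟨h1, e, he, hc⟩ | ⟨h1, h2, h3⟩
    · exact Or.inl ⟨h1.symm, e, by rwa [Sym2.eq_swap], by rwa [← h1]⟩
    · exact Or.inr ⟨h1.symm, Ne.symm h2, h1 ▸ h3⟩
  loopless := by
    constructor
    rintro a (⟨h1, e, he, hc⟩ | ⟨h1, h2, h3⟩)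
    · exact M.not_isDiag e (by rw [he]; exact Sym2.mk_isDiag_iff.mpr rfl)
    · exact h2 rfl

/-- Connection probability in model E₃^T on a multigraph. -/
def PE3M (M : Multigraph V) (T : Set V) (x y : V × Bool) : ℝ :=
  (∑ c : M.E → Bool, pInd ((M.ccGraph c T).Reachable x y)) / 2 ^ Fintype.card M.E

/-- Restriction of a multigraph to the edges satisfying `P` (edge deletion). -/
def Multigraph.restrict (M : Multigraph V) (P : M.E → Prop) : Multigraph V where
  E := {e : M.E // P e}
  fintypeE := Subtype.fintype _
  decEqE := inferInstance
  ends e := M.ends e.1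
  not_isDiag e := M.not_isDiag e.1

/-- Contraction of the vertex `x` into the vertex `y`: every edge endpoint equal to `x`
is renamed `y`, and the edges that become loops are removed. -/
def Multigraph.contract [DecidableEq V] (M : Multigraph V) (x y : V) : Multigraph V where
  E := {e : M.E // ¬ (Sym2.map (fun w => if w = x then y else w) (M.ends e)).IsDiag}
  fintypeE := Subtype.fintype _
  decEqE := inferInstance
  ends e := Sym2.map (fun w => if w = x then y else w) (M.ends e.1)
  not_isDiag e := e.2


set_option linter.unusedSectionVars false
section Aux

lemma pInd_congr {P Q : Prop} (h : P ↔ Q) : pInd P = pInd Q := by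
  simp only [pInd, h]

variable [DecidableEq V] {M : Multigraph V} {T : Set V} {x y z : V} {e₁ e₂ : M.E}

lemma sym2_map_id_of_not_mem (f : V → V) (q : Sym2 V) (h : ∀ w ∈ q, f w = w) :
    Sym2.map f q = q := by
  induction q using Sym2.ind with
  | _ a b =>
    rw [Sym2.map_pair_eq, h a (by simp), h b (by simp)]

namespace V2aux

variable (he : e₁ ≠ e₂) (h₁ : M.ends e₁ = s(x, y)) (h₂ : M.ends e₂ = s(x, z))
  (hyz : y ≠ z)
  (hdeg : ∀ e : M.E, x ∈ M.ends e → e = e₁ ∨ e = e₂)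

include h₁ in
lemma hxy : x ≠ y := by
  intro h
  exact M.not_isDiag e₁ (by rw [h₁]; exact Sym2.mk_isDiag_iff.mpr h)

include h₂ in
lemma hxz : x ≠ z := by
  intro h
  exact M.not_isDiag e₂ (by rw [h₂]; exact Sym2.mk_isDiag_iff.mpr h)

include h₁ h₂ hdeg in
lemma mem_x_iff (e : M.E) : x ∈ M.ends e ↔ e = e₁ ∨ e = e₂ := by
  constructor
  · exact hdeg e
  · rintro (rfl | rfl) <;> simp [h₁, h₂]

include he h₁ h₂ hyz hdeg in
lemma contract_mem_iff (e : M.E) :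
    (Sym2.map (fun w => if w = x then y else w) (M.ends e)).IsDiag ↔ e = e₁ := by
  have hxy' := hxy h₁
  constructor
  · intro hd
    obtain ⟨a, b, hab⟩ : ∃ a b, M.ends e = s(a, b) := by
      induction M.ends e using Sym2.ind with
      | _ a b => exact ⟨a, b, rfl⟩
    rw [hab, Sym2.map_pair_eq, Sym2.mk_isDiag_iff] at hd
    have hne : a ≠ b := by
      intro h; exact M.not_isDiag e (by rw [hab]; exact Sym2.mk_isDiag_iff.mpr h)
    by_cases hax : a = x
    · have hbx : ¬ b = x := fun h => hne (hax.trans h.symm)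
      rw [if_pos hax, if_neg hbx] at hd
      have hxe : x ∈ M.ends e := by rw [hab]; simp [hax.symm]
      rcases hdeg e hxe with rfl | rfl
      · rfl
      · exfalso
        rw [h₂, Sym2.eq_iff] at hab
        rcases hab with ⟨hxa, hzb⟩ | ⟨hxb, hza⟩
        · exact hyz (hd.trans hzb.symm)
        · exact hbx hxb.symm
    · by_cases hbx : b = x
      · rw [if_neg hax, if_pos hbx] at hd
        have hxe : x ∈ M.ends e := by rw [hab]; simp [hbx.symm]
        rcases hdeg e hxe with rfl | rfl
        · rfl
        · exfalso
          rw [h₂, Sym2.eq_iff] at hab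
          rcases hab with ⟨hxa, hzb⟩ | ⟨hxb, hza⟩
          · exact hax hxa.symm
          · exact hyz (hza.trans hd).symm
      · rw [if_neg hax, if_neg hbx] at hd
        exact absurd hd hne
  · rintro rfl
    rw [h₁, Sym2.map_pair_eq]
    simp [Sym2.mk_isDiag_iff, hxy'.symm]

open SimpleGraph in
include he h₁ h₂ hdeg in
lemma reach_restrict (hxT : x ∉ T) {c : M.E → Bool} (hc : c e₁ ≠ c e₂)
    {a b : V × Bool} (ha : a.1 ≠ x) (hb : b.1 ≠ x) :
    (M.ccGraph c T).Reachable a b ↔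
      ((M.restrict (fun e => x ∉ M.ends e)).ccGraph (fun e => c e.1) T).Reachable a b := by
  constructor
  · rintro ⟨w⟩
    suffices H : ∀ n : ℕ, ∀ (a b : V × Bool), a.1 ≠ x → b.1 ≠ x →
        ∀ w : (M.ccGraph c T).Walk a b, w.length ≤ n →
        ((M.restrict (fun e => x ∉ M.ends e)).ccGraph (fun e => c e.1) T).Reachable a b from
      H w.length a b ha hb w le_rfl
    intro n
    induction n with
    | zero =>
      intro a b ha hb w hw
      have : a = b := Walk.eq_of_length_eq_zero (Nat.le_zero.mp hw)
      exact this ▸ Reachable.refl a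
    | succ n ih =>
      intro a b ha hb w hw
      cases w with
      | nil => exact Reachable.refl a
      | cons h p =>
        rename_i m
        by_cases hm : m.1 = x
        · -- the walk passes through x; it must immediately backtrack
          cases p with
          | nil => exact absurd hm hb
          | cons h' q =>
            rename_i d
            -- h : Adj a m, h' : Adj m d with m.1 = x; show d = a
            rcases h with ⟨hlay, e, hee, hce⟩ | ⟨hv1, _, _⟩
            · rcases h' with ⟨hlay', e', hee', hce'⟩ | ⟨_, _, hvT⟩
              · rw [hm] at hee hee'
                have hxe : x ∈ M.ends e := by rw [hee]; simp
                have hxe' : x ∈ M.ends e' := by rw [hee']; simp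
                have hcc : c e = c e' := by
                  rw [hce, hce', hlay]
                have hee'' : e = e' := by
                  rcases hdeg e hxe with rfl | rfl <;> rcases hdeg e' hxe' with rfl | rfl
                  · rfl
                  · exact absurd hcc hc
                  · exact absurd hcc.symm hc
                  · rfl
                have had : a.1 = d.1 := by
                  subst hee''
                  rw [hee] at hee'
                  rw [Sym2.eq_iff] at hee'
                  rcases hee' with ⟨hax, _⟩ | ⟨had, _⟩
                  · exact absurd hax ha
                  · exact had
                have : d = a := Prod.ext had.symm (hlay'.symm.trans hlay.symm)
                subst this
                exact ih d b ha hb q (by have hw' : q.length + 2 ≤ n + 1 := hw; omega)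
              · exact absurd (hm ▸ hvT) hxT
            · exact absurd (hv1.trans hm) ha
        · have hadj : ((M.restrict (fun e => x ∉ M.ends e)).ccGraph
              (fun e => c e.1) T).Adj a m := by
            rcases h with ⟨hlay, e, hee, hce⟩ | hv
            · have hxe : x ∉ M.ends e := by
                rw [hee, Sym2.mem_iff]
                rintro (h | h)
                · exact ha h.symm
                · exact hm h.symm
              exact Or.inl ⟨hlay, ⟨e, hxe⟩, hee, hce⟩
            · exact Or.inr hv
          exact hadj.reachable.trans
            (ih m b hm hb p (by simp [Walk.length_cons] at hw; omega))
  · apply Reachable.mono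
    rintro p q (⟨hlay, e, hee, hce⟩ | hv)
    · exact Or.inl ⟨hlay, e.1, hee, hce⟩
    · exact Or.inr hv
open SimpleGraph in
include he h₁ h₂ hyz hdeg in
lemma reach_contract (hxT : x ∉ T) {c : M.E → Bool} (hc : c e₁ = c e₂)
    {a b : V × Bool} (ha : a.1 ≠ x) (hb : b.1 ≠ x) :
    (M.ccGraph c T).Reachable a b ↔
      ((M.contract x y).ccGraph (fun e => c e.1) T).Reachable a b := by
  have hxy' : x ≠ y := hxy h₁
  have hxz' : x ≠ z := hxz h₂
  constructor
  · -- map every visit of x to y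
    intro hr
    have key : ∀ (p q : V × Bool), (M.ccGraph c T).Reachable p q →
        ((M.contract x y).ccGraph (fun e => c e.1) T).Reachable
          (if p.1 = x then y else p.1, p.2) (if q.1 = x then y else q.1, q.2) := by
      rintro p q ⟨w⟩
      induction w with
      | nil => exact Reachable.refl _
      | @cons s t r h p ih =>
        refine Reachable.trans ?_ ih
        rcases h with ⟨hlay, e, hee, hce⟩ | ⟨hv1, hv2, hvT⟩
        · by_cases he1 : e = e₁
          · -- collapsed edge: images coincide
            subst he1
            rw [h₁, Sym2.eq_iff] at hee
            have heq : (if s.1 = x then y else s.1) = (if t.1 = x then y else t.1) := by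
              rcases hee with ⟨hxs, hyt⟩ | ⟨hxt, hys⟩
              · have htx : t.1 ≠ x := by rw [← hyt]; exact fun h => hxy' h.symm
                rw [if_pos hxs.symm, if_neg htx]
                exact hyt
              · have hsx : s.1 ≠ x := by rw [← hys]; exact fun h => hxy' h.symm
                rw [if_neg hsx, if_pos hxt.symm]
                exact hys.symm
            rw [heq, hlay]
          · have hmem : ¬ (Sym2.map (fun w => if w = x then y else w) (M.ends e)).IsDiag :=
              fun hd => he1 ((contract_mem_iff he h₁ h₂ hyz hdeg e).mp hd)
            refine Adj.reachable (Or.inl ⟨hlay, ⟨e, hmem⟩, ?_, hce⟩)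
            show Sym2.map _ (M.ends e) = _
            rw [hee, Sym2.map_pair_eq]
        · have hsx : s.1 ≠ x := fun h => hxT (h ▸ hvT)
          have htx : t.1 ≠ x := fun h => hsx (hv1.trans h)
          rw [if_neg hsx, if_neg htx]
          exact Adj.reachable (Or.inr ⟨hv1, hv2, hvT⟩)
    have := key a b hr
    rwa [if_neg ha, if_neg hb] at this
  · -- expand contracted steps via the two-edge path through x
    intro hr
    have step : ∀ (p q : V × Bool), ((M.contract x y).ccGraph (fun e => c e.1) T).Adj p q →
        (M.ccGraph c T).Reachable p q := by
      rintro p q (⟨hlay, ⟨e, hmem⟩, hee, hce⟩ | hv)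
      · change Sym2.map _ (M.ends e) = _ at hee
        change c e = _ at hce
        by_cases hx : x ∈ M.ends e
        · have he1 : e ≠ e₁ := fun h => hmem ((contract_mem_iff he h₁ h₂ hyz hdeg e).mpr h)
          have he2 : e = e₂ := (hdeg e hx).resolve_left he1
          rw [he2, h₂, Sym2.map_pair_eq, if_pos rfl, if_neg (Ne.symm hxz'), Sym2.eq_iff] at hee
          have hpe : p.2 = c e₂ := by rw [← hce, he2]
          have hqe : q.2 = c e₂ := by rw [← hlay, hpe]
          -- path (y, γ) - (x, γ) - (z, γ) with γ = c e₂
          have hyx : (M.ccGraph c T).Adj (y, c e₂) (x, c e₂) :=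
            Or.inl ⟨rfl, e₁, by rw [h₁, Sym2.eq_swap], hc⟩
          have hxzadj : (M.ccGraph c T).Adj (x, c e₂) (z, c e₂) :=
            Or.inl ⟨rfl, e₂, h₂, rfl⟩
          have hreach : (M.ccGraph c T).Reachable (y, c e₂) (z, c e₂) :=
            hyx.reachable.trans hxzadj.reachable
          rcases hee with ⟨hyp, hzq⟩ | ⟨hyq, hzp⟩
          · have hp : p = (y, c e₂) := Prod.ext hyp.symm hpe
            have hq : q = (z, c e₂) := Prod.ext hzq.symm hqe
            rw [hp, hq]; exact hreach
          · have hp : p = (z, c e₂) := Prod.ext hzp.symm hpe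
            have hq : q = (y, c e₂) := Prod.ext hyq.symm hqe
            rw [hp, hq]; exact hreach.symm
        · have : Sym2.map (fun w => if w = x then y else w) (M.ends e) = M.ends e := by
            apply sym2_map_id_of_not_mem
            intro w hw
            have hwx : w ≠ x := fun h => hx (h ▸ hw)
            exact if_neg hwx
          rw [this] at hee
          exact Adj.reachable (Or.inl ⟨hlay, e, hee, hce⟩)
      · exact Adj.reachable (Or.inr hv)
    clear ha hb
    obtain ⟨w⟩ := hr
    induction w with
    | nil => exact Reachable.refl _
    | cons h p ih => exact (step _ _ h).trans ih
include he h₁ h₂ hdeg in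
lemma not_mem_iff (e : M.E) : x ∉ M.ends e ↔ (e ≠ e₁ ∧ e ≠ e₂) := by
  rw [mem_x_iff h₁ h₂ hdeg]
  tauto

/-- Split a coloring of `M` into a coloring of `G₁` plus the colors of `e₁, e₂`. -/
def colorEquivDel (he : e₁ ≠ e₂) (h₁ : M.ends e₁ = s(x, y)) (h₂ : M.ends e₂ = s(x, z))
    (hdeg : ∀ e : M.E, x ∈ M.ends e → e = e₁ ∨ e = e₂) :
    (M.E → Bool) ≃ ((M.restrict (fun e => x ∉ M.ends e)).E → Bool) × Bool × Bool where
  toFun c := (fun e => c e.1, c e₁, c e₂)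
  invFun t e :=
    if hh1 : e = e₁ then t.2.1 else if hh2 : e = e₂ then t.2.2
    else t.1 ⟨e, (not_mem_iff he h₁ h₂ hdeg e).mpr ⟨hh1, hh2⟩⟩
  left_inv c := by
    funext e
    by_cases hh1 : e = e₁
    · simp [hh1]
    · by_cases hh2 : e = e₂ <;> simp [hh1, hh2, Ne.symm he]
  right_inv t := by
    rcases t with ⟨d, b₁, b₂⟩
    simp only [Prod.mk.injEq]
    refine ⟨?_, ?_, ?_⟩
    · funext e
      have hh := (not_mem_iff he h₁ h₂ hdeg e.1).mp e.2
      simp [hh.1, hh.2]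
      rfl
    · simp
    · simp [he.symm]

/-- Split a coloring of `M` into a coloring of `G₂` plus the color of `e₁`. -/
def colorEquivCon (he : e₁ ≠ e₂) (h₁ : M.ends e₁ = s(x, y)) (h₂ : M.ends e₂ = s(x, z))
    (hyz : y ≠ z) (hdeg : ∀ e : M.E, x ∈ M.ends e → e = e₁ ∨ e = e₂) :
    (M.E → Bool) ≃ ((M.contract x y).E → Bool) × Bool where
  toFun c := (fun e => c e.1, c e₁)
  invFun t e :=
    if h : e = e₁ then t.2
    else t.1 ⟨e, fun hd => h ((contract_mem_iff he h₁ h₂ hyz hdeg e).mp hd)⟩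
  left_inv c := by
    funext e
    by_cases hh : e = e₁ <;> simp [hh]
  right_inv t := by
    rcases t with ⟨d, b⟩
    simp only [Prod.mk.injEq]
    constructor
    · funext e
      have hh : e.1 ≠ e₁ := fun h => e.2 ((contract_mem_iff he h₁ h₂ hyz hdeg e.1).mpr h)
      simp [hh]
      rfl
    · simp

include he h₁ h₂ hdeg in
lemma card_del :
    Fintype.card M.E = Fintype.card (M.restrict (fun e => x ∉ M.ends e)).E + 2 := by
  have hco := Fintype.card_congr (colorEquivDel he h₁ h₂ hdeg)
  rw [Fintype.card_fun, Fintype.card_prod, Fintype.card_prod, Fintype.card_fun,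
    Fintype.card_bool] at hco
  have : (2 : ℕ) ^ Fintype.card M.E =
      2 ^ (Fintype.card (M.restrict (fun e => x ∉ M.ends e)).E + 2) := by
    rw [pow_add]; omega
  exact Nat.pow_right_injective le_rfl this

include he h₁ h₂ hyz hdeg in
lemma card_con :
    Fintype.card M.E = Fintype.card (M.contract x y).E + 1 := by
  have hco := Fintype.card_congr (colorEquivCon he h₁ h₂ hyz hdeg)
  rw [Fintype.card_fun, Fintype.card_prod, Fintype.card_fun, Fintype.card_bool] at hco
  have : (2 : ℕ) ^ Fintype.card M.E =
      2 ^ (Fintype.card (M.contract x y).E + 1) := by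
    rw [pow_add]; omega
  exact Nat.pow_right_injective le_rfl this
end V2aux
end Aux

/-- V2-operation: let `x ∉ T ∪ {u,v}` have degree 2, with incident edges `e₁ = xy` and
`e₂ = xz`. Conditioned on `e₁, e₂ having different colors, the E₃ connection
probabilities equal those of `G₁ = G ∖ x`; conditioned on equal colors they equal those
of `G₂ = G/xy`; hence `P_G = (P_{G₁} + P_{G₂})/2`, and the bunkbed inequality for `G₁`
and `G₂` implies it for `G`. -/
theorem PE3M_V2_operation [DecidableEq V] (M : Multigraph V) (T : Set V)
    (u v x y z : V) (hxT : x ∉ T) (hxu : x ≠ u) (hxv : x ≠ v) (hyz : y ≠ z)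
    (e₁ e₂ : M.E) (he : e₁ ≠ e₂)
    (h₁ : M.ends e₁ = s(x, y)) (h₂ : M.ends e₂ = s(x, z))
    (hdeg : ∀ e : M.E, x ∈ M.ends e → e = e₁ ∨ e = e₂) :
    (∀ i : Bool,
      (∑ c : M.E → Bool,
          if c e₁ ≠ c e₂ then pInd ((M.ccGraph c T).Reachable (u, false) (v, i)) else 0) /
        2 ^ (Fintype.card M.E - 1) =
      PE3M (M.restrict (fun e => x ∉ M.ends e)) T (u, false) (v, i)) ∧
    (∀ i : Bool,
      (∑ c : M.E → Bool,
          if c e₁ = c e₂ then pInd ((M.ccGraph c T).Reachable (u, false) (v, i)) else 0) /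
        2 ^ (Fintype.card M.E - 1) =
      PE3M (M.contract x y) T (u, false) (v, i)) ∧
    (∀ i : Bool,
      PE3M M T (u, false) (v, i) =
        (PE3M (M.restrict (fun e => x ∉ M.ends e)) T (u, false) (v, i) +
          PE3M (M.contract x y) T (u, false) (v, i)) / 2) ∧
    ((PE3M (M.restrict (fun e => x ∉ M.ends e)) T (u, false) (v, false) ≥
        PE3M (M.restrict (fun e => x ∉ M.ends e)) T (u, false) (v, true)) →
      (PE3M (M.contract x y) T (u, false) (v, false) ≥
        PE3M (M.contract x y) T (u, false) (v, true)) →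
      PE3M M T (u, false) (v, false) ≥ PE3M M T (u, false) (v, true)) := by
  classical
  have hux : (u : V) ≠ x := Ne.symm hxu
  have hvx : (v : V) ≠ x := Ne.symm hxv
  have hcard1 := V2aux.card_del he h₁ h₂ hdeg
  have hcard2 := V2aux.card_con he h₁ h₂ hyz hdeg
  have hmem₂ : ¬ (Sym2.map (fun w => if w = x then y else w) (M.ends e₂)).IsDiag :=
    fun hd => he ((V2aux.contract_mem_iff he h₁ h₂ hyz hdeg e₂).mp hd).symm
  -- Part A (different colors ↔ deletion)
  have hA : ∀ i : Bool,
      (∑ c : M.E → Bool,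
        if c e₁ ≠ c e₂ then pInd ((M.ccGraph c T).Reachable (u, false) (v, i)) else 0)
      = 2 * ∑ d : (M.restrict (fun e => x ∉ M.ends e)).E → Bool,
          pInd (((M.restrict (fun e => x ∉ M.ends e)).ccGraph d T).Reachable
            (u, false) (v, i)) := by
    intro i
    rw [Fintype.sum_equiv (V2aux.colorEquivDel he h₁ h₂ hdeg)
      (fun c => if c e₁ ≠ c e₂ then pInd ((M.ccGraph c T).Reachable (u, false) (v, i)) else 0)
      (fun t => if t.2.1 ≠ t.2.2 then
        pInd (((M.restrict (fun e => x ∉ M.ends e)).ccGraph t.1 T).Reachable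
          (u, false) (v, i)) else 0)
      (by
        intro c
        by_cases hcc : c e₁ = c e₂
        · simp [V2aux.colorEquivDel, hcc]
        · simp only [V2aux.colorEquivDel, Equiv.coe_fn_mk, ne_eq, hcc, not_false_eq_true,
            if_true]
          exact pInd_congr (V2aux.reach_restrict he h₁ h₂ hdeg hxT hcc hux hvx))]
    rw [Fintype.sum_prod_type, Finset.mul_sum]
    apply Finset.sum_congr rfl
    intro d _
    rw [Fintype.sum_prod_type, Fintype.sum_bool, Fintype.sum_bool, Fintype.sum_bool]
    simp only [ne_eq]
    norm_num
    ring
  -- Part B (equal colors ↔ contraction)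
  have hB : ∀ i : Bool,
      (∑ c : M.E → Bool,
        if c e₁ = c e₂ then pInd ((M.ccGraph c T).Reachable (u, false) (v, i)) else 0)
      = ∑ d : (M.contract x y).E → Bool,
          pInd (((M.contract x y).ccGraph d T).Reachable (u, false) (v, i)) := by
    intro i
    rw [Fintype.sum_equiv (V2aux.colorEquivCon he h₁ h₂ hyz hdeg)
      (fun c => if c e₁ = c e₂ then pInd ((M.ccGraph c T).Reachable (u, false) (v, i)) else 0)
      (fun t => if t.2 = t.1 ⟨e₂, hmem₂⟩ then
        pInd (((M.contract x y).ccGraph t.1 T).Reachable (u, false) (v, i)) else 0)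
      (by
        intro c
        by_cases hcc : c e₁ = c e₂
        · simp only [V2aux.colorEquivCon, Equiv.coe_fn_mk, hcc, if_true, if_pos hcc]
          exact pInd_congr (V2aux.reach_contract he h₁ h₂ hyz hdeg hxT hcc hux hvx)
        · simp [V2aux.colorEquivCon, hcc])]
    rw [Fintype.sum_prod_type]
    apply Finset.sum_congr rfl
    intro d _
    exact Fintype.sum_ite_eq' (d ⟨e₂, hmem₂⟩) _
  have hpos1 : (0:ℝ) < 2 ^ Fintype.card (M.restrict (fun e => x ∉ M.ends e)).E := by positivity
  have part1 : ∀ i : Bool,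
      (∑ c : M.E → Bool,
          if c e₁ ≠ c e₂ then pInd ((M.ccGraph c T).Reachable (u, false) (v, i)) else 0) /
        2 ^ (Fintype.card M.E - 1) =
      PE3M (M.restrict (fun e => x ∉ M.ends e)) T (u, false) (v, i) := by
    intro i
    have halg : ∀ (S P : ℝ), P ≠ 0 → 2 * S / (P * 2) = S / P := by
      intro S P hP; field_simp
    rw [hA i, PE3M,
      show Fintype.card M.E - 1 = Fintype.card (M.restrict (fun e => x ∉ M.ends e)).E + 1 by omega,
      pow_succ]
    exact halg _ _ (ne_of_gt hpos1)
  have part2 : ∀ i : Bool,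
      (∑ c : M.E → Bool,
          if c e₁ = c e₂ then pInd ((M.ccGraph c T).Reachable (u, false) (v, i)) else 0) /
        2 ^ (Fintype.card M.E - 1) =
      PE3M (M.contract x y) T (u, false) (v, i) := by
    intro i
    rw [hB i, PE3M, show Fintype.card M.E - 1 = Fintype.card (M.contract x y).E by omega]
  have part3 : ∀ i : Bool,
      PE3M M T (u, false) (v, i) =
        (PE3M (M.restrict (fun e => x ∉ M.ends e)) T (u, false) (v, i) +
          PE3M (M.contract x y) T (u, false) (v, i)) / 2 := by
    intro i
    have hsplit : (∑ c : M.E → Bool, pInd ((M.ccGraph c T).Reachable (u, false) (v, i)))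
        = (∑ c : M.E → Bool,
            if c e₁ ≠ c e₂ then pInd ((M.ccGraph c T).Reachable (u, false) (v, i)) else 0)
          + (∑ c : M.E → Bool,
            if c e₁ = c e₂ then pInd ((M.ccGraph c T).Reachable (u, false) (v, i)) else 0) := by
      rw [← Finset.sum_add_distrib]
      apply Finset.sum_congr rfl
      intro c _
      by_cases hcc : c e₁ = c e₂ <;> simp [hcc]
    have hd1 : (2:ℝ) ^ (Fintype.card M.E - 1) ≠ 0 := by positivity
    have e1 := part1 i
    have e2 := part2 i
    rw [div_eq_iff hd1] at e1 e2
    have halg : ∀ (A B P : ℝ), P ≠ 0 → (A * P + B * P) / (P * 2) = (A + B) / 2 := by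
      intro A B P hP; field_simp
    rw [PE3M, hsplit, e1, e2,
      show Fintype.card M.E = (Fintype.card M.E - 1) + 1 by omega, pow_succ]
    exact halg _ _ _ hd1
  refine ⟨part1, part2, part3, ?_⟩
  intro hg1 hg2
  rw [part3 false, part3 true]
  linarith


end
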